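/- Let (S̃_n) be a process with S̃_0 = 0, S̃_{n+1} = (1 + S̃_n)·λ̃_{n+1}, where λ̃_{n+1} ≥ 0 and E[λ̃_{n+1} | F_n] = 1 a.s. For A > 0 define the stopping time τ̃_s = inf{ n ≥ 1 : S̃_n ≥ A }. If E[τ̃_s] < ∞, then E[τ̃_s] ≥ A. -/

import Mathlib

open MeasureTheory ProbabilityTheory Filter

/-- For the SR statistic S̃ with threshold A > 0 and
τ̃_s = inf{n ≥ 1 : S̃_n ≥ A}, if E[τ̃_s] < ∞ then E[τ̃_s] ≥ A. -/
theorem sr_arl_lower_bound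
    {Ω : Type*} {m0 : MeasurableSpace Ω} {μ : Measure Ω} [IsProbabilityMeasure μ]
    (ℱ : Filtration ℕ m0)
    (lam : ℕ → Ω → ℝ)
    (hlam_adapted : Adapted ℱ lam)
    (hlam_nonneg : ∀ n ω, 0 ≤ lam n ω)
    (hlam_cond : ∀ n, μ[lam (n + 1) | ℱ n] =ᵐ[μ] fun _ => (1 : ℝ))
    (S : ℕ → Ω → ℝ)
    (hS0 : ∀ ω, S 0 ω = 0)
    (hSrec : ∀ n ω, S (n + 1) ω = (1 + S n ω) * lam (n + 1) ω)
    (hSint : ∀ n, Integrable (S n) μ)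
    (A : ℝ) (hA : 0 < A)
    (τ : Ω → ℕ)
    (hτ : ∀ ω, τ ω = sInf {n | 1 ≤ n ∧ A ≤ S n ω})
    (hτfin : ∀ ω, ∃ n, 1 ≤ n ∧ A ≤ S n ω)
    (hτint : Integrable (fun ω => (τ ω : ℝ)) μ) :
    A ≤ ∫ ω, (τ ω : ℝ) ∂μ := by
  -- S is nonnegative
  have hSnonneg : ∀ n ω, 0 ≤ S n ω := by
    intro n
    induction n with
    | zero => intro ω; rw [hS0]
    | succ n ih =>
      intro ω
      rw [hSrec]
      exact mul_nonneg (by linarith [ih ω]) (hlam_nonneg (n + 1) ω)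
  -- S is adapted
  have hSadapted : Adapted ℱ S := by
    intro n
    induction n with
    | zero =>
      have : S 0 = fun _ => (0 : ℝ) := funext hS0
      rw [this]; exact measurable_const
    | succ n ih =>
      have : S (n + 1) = fun ω => (1 + S n ω) * lam (n + 1) ω := funext (hSrec n)
      rw [this]
      exact ((measurable_const.add (ih.mono (ℱ.mono n.le_succ) le_rfl)).mul
        (hlam_adapted (n + 1)))
  -- lam (n+1) is integrable
  have hlam_int : ∀ n, Integrable (lam (n + 1)) μ := by
    intro n
    by_contra h
    have h0 : μ[lam (n + 1) | ℱ n] = 0 := condExp_of_not_integrable h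
    have := hlam_cond n
    rw [h0] at this
    have : (0 : ℝ) = 1 := by
      have h1 := this.symm
      obtain ⟨ω, hω⟩ := (h1.exists)
      simpa using hω.symm
    norm_num at this
  -- the martingale M n = S n - n
  set M : ℕ → Ω → ℝ := fun n ω => S n ω - n with hM
  have hMadapted : Adapted ℱ M := fun n =>
    (hSadapted n).sub measurable_const
  have hMint : ∀ n, Integrable (M n) μ := fun n =>
    (hSint n).sub (integrable_const _)
  have hcond : ∀ n, μ[S (n + 1) | ℱ n] =ᵐ[μ] fun ω => 1 + S n ω := by
    intro n
    have hfmeas : StronglyMeasurable[ℱ n] (fun ω => 1 + S n ω) :=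
      stronglyMeasurable_const.add (hSadapted n).stronglyMeasurable
    have hprod : (fun ω => 1 + S n ω) * lam (n + 1) = S (n + 1) := by
      funext ω; simp [hSrec n ω]
    have hfg : Integrable ((fun ω => 1 + S n ω) * lam (n + 1)) μ := by
      rw [hprod]; exact hSint (n + 1)
    have := condExp_mul_of_stronglyMeasurable_left (μ := μ) hfmeas hfg (hlam_int n)
    rw [hprod] at this
    refine this.trans ?_
    filter_upwards [hlam_cond n] with ω hω
    simp [hω]
  have hMmart : Martingale M ℱ μ := by
    refine martingale_nat hMadapted.stronglyAdapted hMint ?_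
    intro n
    have h1 : μ[M (n + 1) | ℱ n] =ᵐ[μ]
        fun ω => (μ[S (n + 1) | ℱ n]) ω - ((n : ℝ) + 1) := by
      have hMe : M (n + 1) = fun ω => S (n + 1) ω - ((n : ℝ) + 1) := by
        funext ω; simp only [hM]; push_cast; ring
      rw [hMe]
      have h2 := condExp_sub (μ := μ) (m := ℱ n) (hSint (n + 1))
        (integrable_const ((n : ℝ) + 1))
      rw [condExp_const (ℱ.le n) ((n : ℝ) + 1) (μ := μ)] at h2
      exact h2
    refine (h1.trans ?_).symm
    filter_upwards [hcond n] with ω hω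
    simp only [hM]
    rw [hω]; push_cast; ring
  -- τ is a stopping time
  have hτ_iff : ∀ ω n, τ ω ≤ n ↔ ∃ k, 1 ≤ k ∧ k ≤ n ∧ A ≤ S k ω := by
    intro ω n
    constructor
    · intro h
      have hmem := Nat.sInf_mem (s := {n | 1 ≤ n ∧ A ≤ S n ω}) (hτfin ω)
      rw [← hτ ω] at hmem
      exact ⟨τ ω, hmem.1, h, hmem.2⟩
    · rintro ⟨k, hk1, hkn, hkA⟩
      rw [hτ ω]
      exact le_trans (Nat.sInf_le ⟨hk1, hkA⟩) hkn
  have hτst : IsStoppingTime ℱ (fun ω => (τ ω : WithTop ℕ)) := by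
    intro n
    suffices key : MeasurableSet[ℱ n] {ω | τ ω ≤ n} by
      convert key using 1
      ext ω
      simp
    have : {ω | τ ω ≤ n} = ⋃ k ∈ Set.Icc 1 n, {ω | A ≤ S k ω} := by
      ext ω
      simp only [Set.mem_setOf_eq, Set.mem_iUnion, Set.mem_Icc, exists_prop]
      rw [hτ_iff ω n]
      constructor
      · rintro ⟨k, h1, h2, h3⟩; exact ⟨k, ⟨h1, h2⟩, h3⟩
      · rintro ⟨k, ⟨h1, h2⟩, h3⟩; exact ⟨k, h1, h2, h3⟩
    rw [this]
    refine MeasurableSet.biUnion (Set.to_countable _) ?_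
    intro k hk
    have : MeasurableSet[ℱ k] {ω | A ≤ S k ω} :=
      measurableSet_le measurable_const (hSadapted k)
    exact ℱ.mono hk.2 _ this
  -- A ≤ S (τ ω) ω pointwise
  have hAle : ∀ ω, A ≤ S (τ ω) ω := by
    intro ω
    have hmem := Nat.sInf_mem (s := {n | 1 ≤ n ∧ A ≤ S n ω}) (hτfin ω)
    rw [← hτ ω] at hmem
    exact hmem.2
  -- stopped values
  have hτn_st : ∀ n : ℕ, IsStoppingTime ℱ (fun ω => min (τ ω) n) :=
    fun n => hτst.min_const n
  have hτn_le : ∀ n : ℕ, ∀ ω, min (τ ω : WithTop ℕ) n ≤ n := fun n ω => min_le_right _ _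
  have hMs_int : ∀ n : ℕ, Integrable (stoppedValue M (fun ω => min (τ ω) n)) μ :=
    fun n => hMmart.submartingale.integrable_stoppedValue (hτn_st n) (hτn_le n)
  -- E[M_{τ ∧ n}] ≤ E[M 0] = 0
  have hEM : ∀ n : ℕ, ∫ ω, stoppedValue M (fun ω => min (τ ω) n) ω ∂μ ≤ 0 := by
    intro n
    have hsub : Submartingale (-M) ℱ μ := hMmart.neg.submartingale
    have h := hsub.expected_stoppedValue_mono (isStoppingTime_const ℱ 0)
      (hτn_st n) (fun ω => le_min (WithTop.coe_le_coe.mpr (Nat.zero_le _)) (WithTop.coe_le_coe.mpr (Nat.zero_le _))) (hτn_le n)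
    rw [stoppedValue_const] at h
    have h0 : ∫ ω, (-M) 0 ω ∂μ = 0 := by
      simp [hM, hS0]
    have hneg : stoppedValue (-M) (fun ω => min (τ ω) n) =
        fun ω => -(stoppedValue M (fun ω => min (τ ω) n) ω) := by
      funext ω; simp [stoppedValue]
    rw [hneg] at h
    rw [integral_neg] at h
    rw [h0] at h
    linarith
  -- integrability of min (τ ·) n as a real function
  have hmin_int : ∀ n : ℕ, Integrable (fun ω => (min (τ ω) n : ℝ)) μ := by
    intro n
    refine hτint.mono ?_ ?_
    · have hτmeas : Measurable τ := measurable_to_countable' fun n => by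
          convert ℱ.le n _ (hτst.measurableSet_eq_of_countable n) using 1
          ext ω
          simp
      have : Measurable (fun ω => ((τ ω : ℕ) : ℝ)) := measurable_from_top.comp hτmeas
      exact (this.min measurable_const).aestronglyMeasurable
    · filter_upwards with ω
      rw [Real.norm_eq_abs, Real.norm_eq_abs, abs_of_nonneg (by positivity),
        abs_of_nonneg (by positivity)]
      exact min_le_left _ _
  -- stopped S
  have hmt : ∀ ω (n : ℕ), (min (τ ω : WithTop ℕ) (n : WithTop ℕ)).untopA = min (τ ω) n := by
    intro ω n
    rcases le_total (τ ω) n with h | h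
    · rw [min_eq_left (by exact_mod_cast h), min_eq_left h]; rfl
    · rw [min_eq_right (by exact_mod_cast h), min_eq_right h]; rfl
  have hstop_eq : ∀ n : ℕ, stoppedValue S (fun ω => min (τ ω) n) =
      fun ω => stoppedValue M (fun ω => min (τ ω) n) ω + (min (τ ω) n : ℝ) := by
    intro n
    funext ω
    simp only [stoppedValue, hM, hmt]; push_cast; ring
  have hSs_int : ∀ n : ℕ, Integrable (stoppedValue S (fun ω => min (τ ω) n)) μ := by
    intro n
    rw [hstop_eq n]
    exact (hMs_int n).add (hmin_int n)
  -- E[S_{τ ∧ n}] ≤ E[τ]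
  have hES : ∀ n : ℕ, ∫ ω, stoppedValue S (fun ω => min (τ ω) n) ω ∂μ
      ≤ ∫ ω, (τ ω : ℝ) ∂μ := by
    intro n
    rw [hstop_eq n]
    rw [integral_add (hMs_int n) (hmin_int n)]
    have h2 : ∫ ω, (min (τ ω) n : ℝ) ∂μ ≤ ∫ ω, (τ ω : ℝ) ∂μ := by
      refine integral_mono (hmin_int n) hτint ?_
      intro ω
      exact min_le_left _ _
    linarith [hEM n]
  -- Fatou
  have hA_lint : ENNReal.ofReal A ≤ ∫⁻ ω, ENNReal.ofReal (S (τ ω) ω) ∂μ := by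
    calc ENNReal.ofReal A = ∫⁻ _, ENNReal.ofReal A ∂μ := by
          simp [lintegral_const]
      _ ≤ ∫⁻ ω, ENNReal.ofReal (S (τ ω) ω) ∂μ :=
          lintegral_mono fun ω => ENNReal.ofReal_le_ofReal (hAle ω)
  have hptwise : ∀ ω, ENNReal.ofReal (S (τ ω) ω) ≤
      Filter.liminf (fun (n : ℕ) => ENNReal.ofReal (stoppedValue S (fun ω => min (τ ω) n) ω)) atTop := by
    intro ω
    have hev : ∀ᶠ (n : ℕ) in atTop, ENNReal.ofReal (stoppedValue S (fun ω => min (τ ω) n) ω)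
        = ENNReal.ofReal (S (τ ω) ω) := by
      filter_upwards [eventually_ge_atTop (τ ω)] with n hn
      simp only [stoppedValue, hmt, min_eq_left hn]
    have := Filter.liminf_congr hev
    rw [this]
    simp
  have hFatou : ∫⁻ ω, ENNReal.ofReal (S (τ ω) ω) ∂μ ≤
      Filter.liminf (fun (n : ℕ) => ∫⁻ ω, ENNReal.ofReal
        (stoppedValue S (fun ω => min (τ ω) n) ω) ∂μ) atTop := by
    calc ∫⁻ ω, ENNReal.ofReal (S (τ ω) ω) ∂μ
        ≤ ∫⁻ ω, Filter.liminf (fun (n : ℕ) => ENNReal.ofReal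
            (stoppedValue S (fun ω => min (τ ω) n) ω)) atTop ∂μ :=
          lintegral_mono fun ω => hptwise ω
      _ ≤ Filter.liminf (fun (n : ℕ) => ∫⁻ ω, ENNReal.ofReal
            (stoppedValue S (fun ω => min (τ ω) n) ω) ∂μ) atTop := by
          refine lintegral_liminf_le' fun n => ?_
          exact (ENNReal.measurable_ofReal.comp_aemeasurable
            (hSs_int n).aestronglyMeasurable.aemeasurable)
  have hlim_le : Filter.liminf (fun (n : ℕ) => ∫⁻ ω, ENNReal.ofReal
      (stoppedValue S (fun ω => min (τ ω) n) ω) ∂μ) atTop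
      ≤ ENNReal.ofReal (∫ ω, (τ ω : ℝ) ∂μ) := by
    refine liminf_le_of_frequently_le' ?_
    refine Filter.Frequently.of_forall fun n => ?_
    have heq : ∫⁻ ω, ENNReal.ofReal (stoppedValue S (fun ω => min (τ ω) n) ω) ∂μ
        = ENNReal.ofReal (∫ ω, stoppedValue S (fun ω => min (τ ω) n) ω ∂μ) := by
      rw [← ofReal_integral_eq_lintegral_ofReal (hSs_int n)]
      filter_upwards with ω
      exact hSnonneg _ ω
    rw [heq]
    exact ENNReal.ofReal_le_ofReal (hES n)
  have hfinal : ENNReal.ofReal A ≤ ENNReal.ofReal (∫ ω, (τ ω : ℝ) ∂μ) :=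
    le_trans hA_lint (le_trans hFatou hlim_le)
  have hτnn : 0 ≤ ∫ ω, (τ ω : ℝ) ∂μ :=
    integral_nonneg fun ω => by positivity
  exact (ENNReal.ofReal_le_ofReal_iff hτnn).mp hfinal
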